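/- arXiv:2504.21597 — 2 statements merged into one kernel-verified Lean document; each statement's English description precedes it below -/
import Mathlib

section
/- Let Ω ⊂ ℝ³ be an open, convex, bounded set. Then |Ω| ≥ (π/3) · r_in(Ω)² · diam(Ω), where r_in(Ω) is the inradius of Ω (the supremum of radii of balls contained in Ω) and diam(Ω) is the diameter of Ω. -/
open MeasureTheory Real
open scoped RealInnerProductSpace

noncomputable section InradiusDiamAux

namespace InradiusDiamAux

/-! Auxiliary definitions: a standard cone `K0` and linear images of it. -/

def B2 : Set (ℝ × (Fin 2 → ℝ)) := {p | 0 ≤ p.1 ∧ p.1 ≤ 1 ∧ (p.2 0)^2 + (p.2 1)^2 ≤ (1 - p.1)^2}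

lemma hB2closed : IsClosed B2 := by
  have h1 : IsClosed {p : ℝ × (Fin 2 → ℝ) | 0 ≤ p.1} := isClosed_le (by fun_prop) (by fun_prop)
  have h2 : IsClosed {p : ℝ × (Fin 2 → ℝ) | p.1 ≤ 1} := isClosed_le (by fun_prop) (by fun_prop)
  have h3 : IsClosed {p : ℝ × (Fin 2 → ℝ) | (p.2 0)^2 + (p.2 1)^2 ≤ (1 - p.1)^2} :=
    isClosed_le (by fun_prop) (by fun_prop)
  exact (h1.inter (h2.inter h3))

lemma sliceB2 (t : ℝ) (ht : t ∈ Set.Ioc (0:ℝ) 1) :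
    ENNReal.ofReal (π * (1-t)^2) ≤ volume (Prod.mk t ⁻¹' B2) := by
  have hr : (0:ℝ) ≤ 1 - t := by linarith [ht.2]
  have hsub : (MeasurableEquiv.toLp 2 (Fin 2 → ℝ)).symm ⁻¹'
      (Prod.mk t ⁻¹' B2) ⊇ Metric.ball (0 : EuclideanSpace ℝ (Fin 2)) (1-t) := by
    intro x hx
    rw [EuclideanSpace.ball_zero_eq _ hr] at hx
    simp only [Set.mem_setOf_eq, Fin.sum_univ_two] at hx
    refine Set.mem_preimage.2 ?_
    simp only [B2, Set.mem_preimage, Set.mem_setOf_eq]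
    exact ⟨le_of_lt ht.1, ht.2, by simpa using hx.le⟩
  have hmp := (EuclideanSpace.volume_preserving_symm_measurableEquiv_toLp (Fin 2))
  have hms : NullMeasurableSet (Prod.mk t ⁻¹' B2) volume :=
    ((hB2closed.preimage (Continuous.prodMk_right t)).measurableSet).nullMeasurableSet
  calc ENNReal.ofReal (π * (1-t)^2)
      = volume (Metric.ball (0 : EuclideanSpace ℝ (Fin 2)) (1-t)) := by
        rw [EuclideanSpace.volume_ball]
        have hg : (Real.sqrt π ^ Fintype.card (Fin 2) /
            Gamma ((Fintype.card (Fin 2)) / 2 + 1)) = π := by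
          norm_num [Real.sq_sqrt pi_nonneg, Real.Gamma_two]
        rw [hg, ← ENNReal.ofReal_pow hr, ← ENNReal.ofReal_mul (by positivity),
          Fintype.card_fin, mul_comm]
    _ ≤ volume ((MeasurableEquiv.toLp 2 (Fin 2 → ℝ)).symm ⁻¹' (Prod.mk t ⁻¹' B2)) :=
        measure_mono hsub
    _ = volume (Prod.mk t ⁻¹' B2) := hmp.measure_preimage hms

def K0 : Set (EuclideanSpace ℝ (Fin 3)) :=
  {q | 0 ≤ q 0 ∧ q 0 ≤ 1 ∧ (q 1)^2 + (q 2)^2 ≤ (1 - q 0)^2}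

lemma volB2 : ENNReal.ofReal (π/3) ≤ volume B2 := by
  rw [show (volume : Measure (ℝ × (Fin 2 → ℝ))) = (volume : Measure ℝ).prod volume from rfl,
    Measure.prod_apply hB2closed.measurableSet]
  calc ENNReal.ofReal (π/3)
      = ENNReal.ofReal (∫ t in Set.Ioc (0:ℝ) 1, π * (1-t)^2) := by
        rw [← intervalIntegral.integral_of_le zero_le_one,
          intervalIntegral.integral_const_mul]
        rw [intervalIntegral.integral_comp_sub_left (fun x => x^2) 1]
        norm_num [integral_pow]
        ring_nf
    _ ≤ ∫⁻ t in Set.Ioc (0:ℝ) 1, ENNReal.ofReal (π * (1-t)^2) := by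
        rw [← ofReal_integral_eq_lintegral_ofReal]
        · exact ((continuous_const.mul (by fun_prop)).integrableOn_Icc).mono_set
            Set.Ioc_subset_Icc_self
        · filter_upwards [self_mem_ae_restrict measurableSet_Ioc] with t ht
          simpa using mul_nonneg pi_nonneg (sq_nonneg (1 - t))
    _ ≤ ∫⁻ t in Set.Ioc (0:ℝ) 1, volume (Prod.mk t ⁻¹' B2) := by
        refine lintegral_mono_ae ?_
        filter_upwards [self_mem_ae_restrict measurableSet_Ioc] with t ht
        exact sliceB2 t ht
    _ ≤ ∫⁻ t, volume (Prod.mk t ⁻¹' B2) := setLIntegral_le_lintegral _ _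

lemma volK0 : ENNReal.ofReal (π/3) ≤ volume K0 := by
  have hmp := EuclideanSpace.volume_preserving_symm_measurableEquiv_toLp (Fin 3)
  have hmp2 := MeasureTheory.volume_preserving_piFinSuccAbove (fun _ : Fin 3 => ℝ) 0
  have hK0 : K0 = (MeasurableEquiv.toLp 2 (Fin 3 → ℝ)).symm ⁻¹'
      ((MeasurableEquiv.piFinSuccAbove (fun _ : Fin 3 => ℝ) 0) ⁻¹' B2) := by
    ext q
    simp only [K0, B2, Set.mem_preimage, Set.mem_setOf_eq,
      MeasurableEquiv.piFinSuccAbove, MeasurableEquiv.coe_mk, Equiv.coe_fn_mk]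
    rfl
  rw [hK0, hmp.measure_preimage ?_, hmp2.measure_preimage ?_]
  · exact volB2
  · exact hB2closed.measurableSet.nullMeasurableSet
  · exact ((hB2closed.measurableSet.preimage
      (MeasurableEquiv.piFinSuccAbove (fun _ : Fin 3 => ℝ) 0).measurable)).nullMeasurableSet

lemma hK0compact : IsCompact K0 := by
  apply Metric.isCompact_of_isClosed_isBounded
  · have h1 : IsClosed {q : EuclideanSpace ℝ (Fin 3) | 0 ≤ q 0} :=
      isClosed_le (by fun_prop) (by fun_prop)
    have h2 : IsClosed {q : EuclideanSpace ℝ (Fin 3) | q 0 ≤ 1} :=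
      isClosed_le (by fun_prop) (by fun_prop)
    have h3 : IsClosed {q : EuclideanSpace ℝ (Fin 3) | (q 1)^2 + (q 2)^2 ≤ (1 - q 0)^2} :=
      isClosed_le (by fun_prop) (by fun_prop)
    exact (h1.inter (h2.inter h3))
  · rw [Metric.isBounded_iff_subset_closedBall 0]
    refine ⟨2, fun q hq => ?_⟩
    obtain ⟨h0, h1, h2⟩ := hq
    have hn : ‖q‖ ≤ 2 := by
      rw [EuclideanSpace.norm_eq]
      have h4 : Real.sqrt (∑ i, ‖q i‖^2) ≤ Real.sqrt 4 := by
        apply Real.sqrt_le_sqrt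
        rw [Fin.sum_univ_three]
        simp only [Real.norm_eq_abs, sq_abs]
        nlinarith
      calc Real.sqrt (∑ i, ‖q i‖^2) ≤ Real.sqrt 4 := h4
        _ = 2 := by rw [show (4:ℝ) = 2^2 by norm_num, Real.sqrt_sq (by norm_num)]
    simpa [Metric.mem_closedBall, dist_eq_norm] using hn

def coneM (s : ℝ) (c : EuclideanSpace ℝ (Fin 3)) : Matrix (Fin 3) (Fin 3) ℝ :=
  !![c 0, 0, 0; c 1, s, 0; c 2, 0, s]

def coneL (b : OrthonormalBasis (Fin 3) ℝ (EuclideanSpace ℝ (Fin 3)))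
    (s : ℝ) (c : EuclideanSpace ℝ (Fin 3)) :
    EuclideanSpace ℝ (Fin 3) →ₗ[ℝ] EuclideanSpace ℝ (Fin 3) :=
  (b.repr.symm.toLinearMap).comp (Matrix.toEuclideanLin (coneM s c))

lemma coneM_det (s : ℝ) (c : EuclideanSpace ℝ (Fin 3)) :
    (coneM s c).det = c 0 * (s * s) := by
  simp [coneM, Matrix.det_fin_three]; ring

lemma coneL_vol (b : OrthonormalBasis (Fin 3) ℝ (EuclideanSpace ℝ (Fin 3)))
    (s : ℝ) (c : EuclideanSpace ℝ (Fin 3)) :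
    volume (coneL b s c '' K0) = ENNReal.ofReal |c 0 * (s * s)| * volume K0 := by
  have hdet : LinearMap.det ((Matrix.toEuclideanLin (coneM s c)) :
      EuclideanSpace ℝ (Fin 3) →ₗ[ℝ] EuclideanSpace ℝ (Fin 3)) = (coneM s c).det := by
    rw [Matrix.toEuclideanLin_eq_toLin, LinearMap.det_toLin]
  have himg : coneL b s c '' K0 =
      b.repr.symm '' (Matrix.toEuclideanLin (coneM s c) '' K0) := by
    rw [coneL, LinearMap.coe_comp, Set.image_comp]
    rfl
  have hmeasA : NullMeasurableSet (Matrix.toEuclideanLin (coneM s c) '' K0) volume :=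
    ((hK0compact.image
      (LinearMap.continuous_of_finiteDimensional _)).isClosed.measurableSet).nullMeasurableSet
  rw [himg, LinearIsometryEquiv.image_eq_preimage_symm, LinearIsometryEquiv.symm_symm,
    (b.measurePreserving_repr).measure_preimage hmeasA,
    Measure.addHaar_image_linearMap, hdet, coneM_det]

lemma coneL_apply (b : OrthonormalBasis (Fin 3) ℝ (EuclideanSpace ℝ (Fin 3)))
    (s : ℝ) (c q : EuclideanSpace ℝ (Fin 3)) :
    coneL b s c q = q 0 • b.repr.symm c +
      s • b.repr.symm ((WithLp.equiv 2 (Fin 3 → ℝ)).symm ![0, q 1, q 2]) := by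
  have h : Matrix.toEuclideanLin (coneM s c) q
      = q 0 • c + s • ((WithLp.equiv 2 (Fin 3 → ℝ)).symm ![0, q 1, q 2]) := by
    apply (WithLp.equiv 2 (Fin 3 → ℝ)).injective
    funext i
    fin_cases i <;>
      simp [coneM, Matrix.toEuclideanLin_apply, Matrix.mulVec, dotProduct,
        Fin.sum_univ_three] <;> ring
  rw [coneL, LinearMap.comp_apply]
  change b.repr.symm (Matrix.toEuclideanLin (coneM s c) q) = _
  rw [h, map_add]
  rw [LinearIsometryEquiv.map_smul, LinearIsometryEquiv.map_smul]

lemma coneL_repr0 (b : OrthonormalBasis (Fin 3) ℝ (EuclideanSpace ℝ (Fin 3)))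
    (s : ℝ) (c q : EuclideanSpace ℝ (Fin 3)) :
    b.repr (coneL b s c q) 0 = c 0 * q 0 := by
  rw [coneL, LinearMap.comp_apply]
  change b.repr (b.repr.symm (Matrix.toEuclideanLin (coneM s c) q)) 0 = _
  rw [LinearIsometryEquiv.apply_symm_apply]
  simp [coneM, Matrix.toEuclideanLin_apply, Matrix.mulVec, dotProduct,
    Fin.sum_univ_three]

lemma cone_subset (Ω : Set (EuclideanSpace ℝ (Fin 3))) (hconv : Convex ℝ Ω)
    {z p : EuclideanSpace ℝ (Fin 3)} {s : ℝ} (hs : 0 < s)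
    (hball : Metric.closedBall z s ⊆ Ω) (hp : p ∈ Ω)
    (b : OrthonormalBasis (Fin 3) ℝ (EuclideanSpace ℝ (Fin 3))) :
    (fun w => z + w) '' (coneL b s (b.repr (p - z)) '' K0) ⊆ Ω := by
  rintro _ ⟨_, ⟨q, hq, rfl⟩, rfl⟩
  obtain ⟨hq0, hq1, hq2⟩ := hq
  set w : EuclideanSpace ℝ (Fin 3) :=
    s • b.repr.symm ((WithLp.equiv 2 (Fin 3 → ℝ)).symm ![0, q 1, q 2]) with hw
  have hwnorm : ‖w‖ ≤ s * (1 - q 0) := by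
    rw [hw, norm_smul, Real.norm_eq_abs, abs_of_pos hs]
    have h1 : ‖b.repr.symm ((WithLp.equiv 2 (Fin 3 → ℝ)).symm ![0, q 1, q 2])‖
        = ‖((WithLp.equiv 2 (Fin 3 → ℝ)).symm ![0, q 1, q 2] : EuclideanSpace ℝ (Fin 3))‖ :=
      LinearIsometryEquiv.norm_map _ _
    rw [h1]
    have h2 : ‖((WithLp.equiv 2 (Fin 3 → ℝ)).symm ![0, q 1, q 2] : EuclideanSpace ℝ (Fin 3))‖
        ≤ 1 - q 0 := by
      rw [EuclideanSpace.norm_eq]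
      have h5 : Real.sqrt (∑ i, ‖((WithLp.equiv 2 (Fin 3 → ℝ)).symm ![0, q 1, q 2] :
          EuclideanSpace ℝ (Fin 3)) i‖^2) ≤ Real.sqrt ((1 - q 0)^2) := by
        apply Real.sqrt_le_sqrt
        rw [Fin.sum_univ_three]
        simpa [sq_abs] using hq2
      calc _ ≤ Real.sqrt ((1 - q 0)^2) := h5
        _ = 1 - q 0 := by rw [Real.sqrt_sq (by linarith)]
    exact mul_le_mul_of_nonneg_left h2 hs.le
  have hpt : z + coneL b s (b.repr (p - z)) q = q 0 • p + (1 - q 0) • z + w := by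
    rw [coneL_apply, LinearIsometryEquiv.symm_apply_apply, ← hw]
    module
  show z + (coneL b s (b.repr (p - z))) q ∈ Ω
  rw [hpt]
  by_cases h1 : q 0 = 1
  · have h6 : ‖w‖ ≤ 0 := by rw [h1] at hwnorm; simpa using hwnorm
    have hw0 : w = 0 := by simpa using le_antisymm h6 (norm_nonneg w)
    rw [h1, hw0]
    simpa using hp
  · have hlt : q 0 < 1 := lt_of_le_of_ne hq1 h1
    have hpos : 0 < 1 - q 0 := by linarith
    set m : EuclideanSpace ℝ (Fin 3) := z + (1 - q 0)⁻¹ • w with hm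
    have hmem : m ∈ Metric.closedBall z s := by
      rw [Metric.mem_closedBall, hm, dist_eq_norm]
      have h7 : z + (1 - q 0)⁻¹ • w - z = (1 - q 0)⁻¹ • w := by abel
      rw [h7, norm_smul, Real.norm_eq_abs, abs_of_pos (by positivity)]
      calc (1 - q 0)⁻¹ * ‖w‖ ≤ (1 - q 0)⁻¹ * (s * (1 - q 0)) :=
            mul_le_mul_of_nonneg_left hwnorm (by positivity)
        _ = s := by field_simp
    have h8 : q 0 • p + (1 - q 0) • z + w = q 0 • p + (1 - q 0) • m := by
      rw [hm, smul_add, smul_smul, mul_inv_cancel₀ (by linarith), one_smul]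
      abel
    rw [h8]
    exact hconv hp (hball hmem) hq0 hpos.le (by ring)

lemma pair (Ω : Set (EuclideanSpace ℝ (Fin 3))) (hconv : Convex ℝ Ω)
    {z x y : EuclideanSpace ℝ (Fin 3)} {s : ℝ} (hs : 0 < s)
    (hball : Metric.closedBall z s ⊆ Ω) (hx : x ∈ Ω) (hy : y ∈ Ω) (hxy : x ≠ y) :
    ENNReal.ofReal (π/3 * s^2 * dist x y) ≤ volume Ω := by
  set d := dist x y with hd
  have hdpos : 0 < d := dist_pos.2 hxy
  set u : EuclideanSpace ℝ (Fin 3) := d⁻¹ • (x - y) with hu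
  have hunorm : ‖u‖ = 1 := by
    rw [hu, norm_smul, Real.norm_eq_abs, abs_of_pos (by positivity), ← dist_eq_norm, ← hd]
    field_simp
  have hor : Orthonormal ℝ (({0} : Set (Fin 3)).restrict (fun _ : Fin 3 => u)) := by
    constructor
    · intro i; exact hunorm
    · intro i j hij
      exact absurd (Subtype.ext ((Set.mem_singleton_iff.mp i.2).trans
        (Set.mem_singleton_iff.mp j.2).symm)) hij
  have hcard : Module.finrank ℝ (EuclideanSpace ℝ (Fin 3)) = Fintype.card (Fin 3) := by simp
  obtain ⟨b, hb⟩ := hor.exists_orthonormalBasis_extension_of_card_eq hcard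
  have hb0 : b 0 = u := hb 0 rfl
  set cx := b.repr (x - z) with hcx
  set cy := b.repr (y - z) with hcy
  have hrepr : ∀ v : EuclideanSpace ℝ (Fin 3), b.repr v 0 = (inner ℝ u v : ℝ) := by
    intro v; rw [← hb0]; exact b.repr_apply_apply v 0
  have hsum : cx 0 - cy 0 = d := by
    rw [hcx, hcy, hrepr, hrepr, ← inner_sub_right]
    have h9 : x - z - (y - z) = x - y := by abel
    rw [h9, hu, real_inner_smul_left, real_inner_self_eq_norm_sq, ← dist_eq_norm, ← hd]
    field_simp
  set C1 := (fun w => z + w) '' (coneL b s cx '' K0) with hC1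
  set C2 := (fun w => z + w) '' (coneL b s cy '' K0) with hC2
  have hC1sub : C1 ⊆ Ω := cone_subset Ω hconv hs hball hx b
  have hC2sub : C2 ⊆ Ω := cone_subset Ω hconv hs hball hy b
  -- inner products on the cones
  have hinner1 : ∀ pt ∈ C1, ∃ t : ℝ, 0 ≤ t ∧ (inner ℝ u (pt - z) : ℝ) = cx 0 * t := by
    rintro _ ⟨_, ⟨q, hq, rfl⟩, rfl⟩
    refine ⟨q 0, hq.1, ?_⟩
    rw [← hrepr]
    have h10 : z + coneL b s cx q - z = coneL b s cx q := by abel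
    rw [h10, coneL_repr0]
  have hinner2 : ∀ pt ∈ C2, ∃ t : ℝ, 0 ≤ t ∧ (inner ℝ u (pt - z) : ℝ) = cy 0 * t := by
    rintro _ ⟨_, ⟨q, hq, rfl⟩, rfl⟩
    refine ⟨q 0, hq.1, ?_⟩
    rw [← hrepr]
    have h10 : z + coneL b s cy q - z = coneL b s cy q := by abel
    rw [h10, coneL_repr0]
  -- plane has measure zero
  have hplane : volume {pt : EuclideanSpace ℝ (Fin 3) | (inner ℝ u (pt - z) : ℝ) = 0} = 0 := by
    have hset : {pt : EuclideanSpace ℝ (Fin 3) | (inner ℝ u (pt - z) : ℝ) = 0}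
        = (fun w => -z + w) ⁻¹' ((ℝ ∙ u)ᗮ : Submodule ℝ (EuclideanSpace ℝ (Fin 3))) := by
      ext pt
      simp only [Set.mem_setOf_eq, Set.mem_preimage, SetLike.mem_coe,
        Submodule.mem_orthogonal_singleton_iff_inner_right]
      rw [show -z + pt = pt - z by abel]
    rw [hset, measure_preimage_add]
    refine Measure.addHaar_submodule _ _ ?_
    intro heq
    have hmem : u ∈ ((ℝ ∙ u)ᗮ : Submodule ℝ (EuclideanSpace ℝ (Fin 3))) := by
      rw [heq]; trivial
    have := Submodule.mem_orthogonal_singleton_iff_inner_right.mp hmem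
    rw [real_inner_self_eq_norm_sq, hunorm] at this
    norm_num at this
  -- volumes of the cones
  have htr : ∀ A : Set (EuclideanSpace ℝ (Fin 3)), volume ((fun w => z + w) '' A) = volume A := by
    intro A
    rw [show (fun w => z + w) '' A = (fun w => -z + w) ⁻¹' A by
      ext v
      simp only [Set.mem_image, Set.mem_preimage]
      constructor
      · rintro ⟨a, ha, rfl⟩; simpa using ha
      · intro h; exact ⟨-z + v, h, by abel⟩]
    exact measure_preimage_add _ _ _
  have hvolC1 : volume C1 = ENNReal.ofReal |cx 0 * (s * s)| * volume K0 := by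
    rw [hC1, htr, coneL_vol]
  have hvolC2 : volume C2 = ENNReal.ofReal |cy 0 * (s * s)| * volume K0 := by
    rw [hC2, htr, coneL_vol]
  -- half spaces
  set Hp := {pt : EuclideanSpace ℝ (Fin 3) | 0 < (inner ℝ u (pt - z) : ℝ)} with hHp
  set Hm := {pt : EuclideanSpace ℝ (Fin 3) | (inner ℝ u (pt - z) : ℝ) < 0} with hHm
  have hcontinner : Continuous fun pt : EuclideanSpace ℝ (Fin 3) => (inner ℝ u (pt - z) : ℝ) :=
    Continuous.inner continuous_const (continuous_id.sub continuous_const)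
  have claim1 : ENNReal.ofReal (π/3 * s^2 * cx 0) ≤ volume (C1 ∩ Hp) := by
    rcases le_or_gt (cx 0) 0 with h | h
    · rw [ENNReal.ofReal_of_nonpos (mul_nonpos_of_nonneg_of_nonpos (by positivity) h)]
      exact zero_le
    · have hdiff : C1 \ Hp ⊆ {pt : EuclideanSpace ℝ (Fin 3) | (inner ℝ u (pt - z) : ℝ) = 0} := by
        rintro pt ⟨hpt, hnot⟩
        obtain ⟨t, ht0, hteq⟩ := hinner1 pt hpt
        simp only [hHp, Set.mem_setOf_eq, not_lt] at hnot
        have : 0 ≤ (inner ℝ u (pt - z) : ℝ) := by rw [hteq]; positivity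
        exact le_antisymm hnot this
      have h0 : volume (C1 \ Hp) = 0 := measure_mono_null hdiff hplane
      have hle : volume C1 ≤ volume (C1 ∩ Hp) := by
        calc volume C1 ≤ volume (C1 ∩ Hp) + volume (C1 \ Hp) := measure_le_inter_add_diff _ _ _
          _ = volume (C1 ∩ Hp) := by rw [h0, add_zero]
      calc ENNReal.ofReal (π/3 * s^2 * cx 0)
          ≤ ENNReal.ofReal |cx 0 * (s * s)| * ENNReal.ofReal (π/3) := by
            rw [← ENNReal.ofReal_mul (abs_nonneg _)]
            apply ENNReal.ofReal_le_ofReal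
            have := le_abs_self (cx 0 * (s * s))
            nlinarith [pi_pos]
        _ ≤ ENNReal.ofReal |cx 0 * (s * s)| * volume K0 := mul_le_mul_right volK0 _
        _ = volume C1 := hvolC1.symm
        _ ≤ volume (C1 ∩ Hp) := hle
  have claim2 : ENNReal.ofReal (π/3 * s^2 * (-(cy 0))) ≤ volume (C2 ∩ Hm) := by
    rcases le_or_gt 0 (cy 0) with h | h
    · rw [ENNReal.ofReal_of_nonpos (mul_nonpos_of_nonneg_of_nonpos (by positivity) (by linarith))]
      exact zero_le
    · have hdiff : C2 \ Hm ⊆ {pt : EuclideanSpace ℝ (Fin 3) | (inner ℝ u (pt - z) : ℝ) = 0} := by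
        rintro pt ⟨hpt, hnot⟩
        obtain ⟨t, ht0, hteq⟩ := hinner2 pt hpt
        simp only [hHm, Set.mem_setOf_eq, not_lt] at hnot
        have : (inner ℝ u (pt - z) : ℝ) ≤ 0 := by
          rw [hteq]
          exact mul_nonpos_of_nonpos_of_nonneg h.le ht0
        exact le_antisymm this hnot
      have h0 : volume (C2 \ Hm) = 0 := measure_mono_null hdiff hplane
      have hle : volume C2 ≤ volume (C2 ∩ Hm) := by
        calc volume C2 ≤ volume (C2 ∩ Hm) + volume (C2 \ Hm) := measure_le_inter_add_diff _ _ _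
          _ = volume (C2 ∩ Hm) := by rw [h0, add_zero]
      calc ENNReal.ofReal (π/3 * s^2 * (-(cy 0)))
          ≤ ENNReal.ofReal |cy 0 * (s * s)| * ENNReal.ofReal (π/3) := by
            rw [← ENNReal.ofReal_mul (abs_nonneg _)]
            apply ENNReal.ofReal_le_ofReal
            have := neg_le_abs (cy 0 * (s * s))
            nlinarith [pi_pos]
        _ ≤ ENNReal.ofReal |cy 0 * (s * s)| * volume K0 := mul_le_mul_right volK0 _
        _ = volume C2 := hvolC2.symm
        _ ≤ volume (C2 ∩ Hm) := hle
  -- disjointness and measurability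
  have hdisj : Disjoint (C1 ∩ Hp) (C2 ∩ Hm) := by
    rw [Set.disjoint_left]
    rintro pt ⟨_, h1⟩ ⟨_, h2⟩
    simp only [hHp, hHm, Set.mem_setOf_eq] at h1 h2
    linarith
  have hmeas2 : MeasurableSet (C2 ∩ Hm) := by
    have hcpt : IsCompact C2 := by
      rw [hC2]
      exact ((hK0compact.image
        (LinearMap.continuous_of_finiteDimensional _)).image (by fun_prop))
    exact hcpt.isClosed.measurableSet.inter
      ((isOpen_lt hcontinner continuous_const).measurableSet)
  have hfinal : π/3 * s^2 * d = π/3 * s^2 * cx 0 + π/3 * s^2 * (-(cy 0)) := by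
    rw [← hsum]; ring
  calc ENNReal.ofReal (π/3 * s^2 * d)
      ≤ ENNReal.ofReal (π/3 * s^2 * cx 0) + ENNReal.ofReal (π/3 * s^2 * (-(cy 0))) := by
        rw [hfinal]; exact ENNReal.ofReal_add_le
    _ ≤ volume (C1 ∩ Hp) + volume (C2 ∩ Hm) := add_le_add claim1 claim2
    _ = volume ((C1 ∩ Hp) ∪ (C2 ∩ Hm)) := (measure_union hdisj hmeas2).symm
    _ ≤ volume Ω := measure_mono (Set.union_subset
        ((Set.inter_subset_left).trans hC1sub) ((Set.inter_subset_left).trans hC2sub))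

end InradiusDiamAux

end InradiusDiamAux

open InradiusDiamAux in
/-- For an open, convex, bounded set `Ω ⊂ ℝ³`,
`|Ω| ≥ (π/3) · r_in(Ω)² · diam(Ω)` where `r_in` is the inradius. -/
theorem volume_ge_pi_div_three_inradius_sq_mul_diam
    (Ω : Set (EuclideanSpace ℝ (Fin 3)))
    (hopen : IsOpen Ω) (hconv : Convex ℝ Ω) (hbdd : Bornology.IsBounded Ω) :
    (volume Ω).toReal ≥
      (Real.pi / 3) * (sSup {r : ℝ | 0 < r ∧ ∃ z, Metric.ball z r ⊆ Ω}) ^ 2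
        * Metric.diam Ω := by
  set R := {r : ℝ | 0 < r ∧ ∃ z, Metric.ball z r ⊆ Ω} with hR
  set ρ := sSup R with hρdef
  have hρ0 : 0 ≤ ρ := Real.sSup_nonneg (fun r hr => hr.1.le)
  have hμfin : volume Ω ≠ ⊤ := by
    obtain ⟨Rb, hRb⟩ := hbdd.subset_closedBall 0
    exact ne_top_of_le_ne_top (measure_closedBall_lt_top).ne (measure_mono hRb)
  rcases eq_or_lt_of_le hρ0 with hρ | hρ
  · rw [ge_iff_le, ← hρ]
    simpa using ENNReal.toReal_nonneg
  rcases eq_or_lt_of_le (Metric.diam_nonneg (s := Ω)) with hD | hD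
  · rw [ge_iff_le, ← hD]
    simpa using ENNReal.toReal_nonneg
  have hRne : R.Nonempty := by
    by_contra h
    rw [Set.not_nonempty_iff_eq_empty] at h
    rw [hρdef, h, Real.sSup_empty] at hρ
    exact lt_irrefl 0 hρ
  have key : ∀ t ∈ Set.Ioo (0:ℝ) (Metric.diam Ω), ∀ s ∈ Set.Ioo (0:ℝ) ρ,
      π/3 * s^2 * t ≤ (volume Ω).toReal := by
    intro t ht s hsm
    obtain ⟨r, hrR, hsr⟩ := exists_lt_of_lt_csSup hRne hsm.2
    obtain ⟨z, hz⟩ := hrR.2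
    have hball : Metric.closedBall z s ⊆ Ω := (Metric.closedBall_subset_ball hsr).trans hz
    obtain ⟨x, hx, y, hy, hxy⟩ : ∃ x ∈ Ω, ∃ y ∈ Ω, t < dist x y := by
      by_contra h
      push_neg at h
      exact absurd (Metric.diam_le_of_forall_dist_le ht.1.le h) (not_le.2 ht.2)
    have hne : x ≠ y := by
      intro h
      rw [h, dist_self] at hxy
      linarith [ht.1]
    have hp := pair Ω hconv hsm.1 hball hx hy hne
    have h2 : π/3 * s^2 * dist x y ≤ (volume Ω).toReal :=
      (ENNReal.ofReal_le_iff_le_toReal hμfin).mp hp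
    have h3 : π/3 * s^2 * t ≤ π/3 * s^2 * dist x y :=
      mul_le_mul_of_nonneg_left hxy.le (by positivity)
    linarith
  have key2 : ∀ t ∈ Set.Ioo (0:ℝ) (Metric.diam Ω),
      π/3 * ρ^2 * t ≤ (volume Ω).toReal := by
    intro t ht
    have hcont : Filter.Tendsto (fun s : ℝ => π/3 * s^2 * t)
        (nhdsWithin ρ (Set.Iio ρ)) (nhds (π/3 * ρ^2 * t)) :=
      ((continuous_const.mul ((continuous_pow 2).comp continuous_id)).mul
        continuous_const).tendsto ρ |>.mono_left nhdsWithin_le_nhds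
    refine le_of_tendsto hcont ?_
    filter_upwards [Ioo_mem_nhdsLT_of_mem (Set.mem_Ioc.mpr ⟨hρ, le_refl ρ⟩)] with s hs
    exact key t ht s hs
  have final : π/3 * ρ^2 * Metric.diam Ω ≤ (volume Ω).toReal := by
    have hcont : Filter.Tendsto (fun t : ℝ => π/3 * ρ^2 * t)
        (nhdsWithin (Metric.diam Ω) (Set.Iio (Metric.diam Ω)))
        (nhds (π/3 * ρ^2 * Metric.diam Ω)) :=
      (continuous_const.mul continuous_id).tendsto (Metric.diam Ω)
        |>.mono_left nhdsWithin_le_nhds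
    refine le_of_tendsto hcont ?_
    filter_upwards [Ioo_mem_nhdsLT_of_mem (Set.mem_Ioc.mpr ⟨hD, le_refl _⟩)] with t htm
    exact key2 t htm
  exact final
end

section
/- For every open convex bounded set Ω ⊂ ℝ³, any two points x, y ∈ Ω, and any ball B(z, r) ⊆ Ω, the volume of Ω is at least (π/3) r² |x - y|. (Key step in the inradius–diameter volume inequality: the convex hull of a disk of radius r centered at z orthogonal to the segment xy, together with x and y, is contained in Ω and has volume at least (π/3) r² |x−y|.) -/
open MeasureTheory Set
open scoped RealInnerProductSpace

lemma disk_volume (c : Fin 2 → ℝ) (ρ : ℝ) (hρ : 0 < ρ) :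
    volume {v : Fin 2 → ℝ | (v 0 - c 0) ^ 2 + (v 1 - c 1) ^ 2 < ρ ^ 2}
      = ENNReal.ofReal Real.pi * ENNReal.ofReal ρ ^ 2 := by
  have hmeas : MeasurableSet {v : Fin 2 → ℝ | (v 0 - c 0) ^ 2 + (v 1 - c 1) ^ 2 < ρ ^ 2} := by
    apply measurableSet_lt
    · fun_prop
    · fun_prop
  have := (EuclideanSpace.volume_preserving_symm_measurableEquiv_toLp (Fin 2)).measure_preimage
      hmeas.nullMeasurableSet
  rw [← this]
  have hset : (MeasurableEquiv.toLp 2 (Fin 2 → ℝ)).symm ⁻¹'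
      {v : Fin 2 → ℝ | (v 0 - c 0) ^ 2 + (v 1 - c 1) ^ 2 < ρ ^ 2}
      = Metric.ball ((MeasurableEquiv.toLp 2 (Fin 2 → ℝ)).symm.symm c) ρ := by
    ext q
    simp only [Set.mem_preimage, Set.mem_setOf_eq, Metric.mem_ball]
    rw [EuclideanSpace.dist_eq]
    rw [show ∀ X, Real.sqrt X < ρ ↔ X < ρ ^ 2 from fun X => Real.sqrt_lt' hρ]
    rw [Fin.sum_univ_two]
    have h0 : ∀ i, (MeasurableEquiv.toLp 2 (Fin 2 → ℝ)).symm q i = q i := fun _ => rfl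
    have h1 : ∀ i, ((MeasurableEquiv.toLp 2 (Fin 2 → ℝ)).symm.symm c) i = c i := fun _ => rfl
    rw [h0, h0, h1, h1]
    simp only [Real.dist_eq, sq_abs]
  rw [hset, EuclideanSpace.volume_ball]
  have : (Fintype.card (Fin 2)) = 2 := by simp
  rw [this]
  rw [show ((2:ℕ) : ℝ) / 2 + 1 = 2 by norm_num, Real.Gamma_two]
  rw [div_one, Real.sq_sqrt Real.pi_pos.le, mul_comm]

lemma integral_cone (h r : ℝ) (hh : 0 < h) :
    ∫⁻ t in Set.Ioo (0:ℝ) h, ENNReal.ofReal (Real.pi * r ^ 2 * (1 - t / h) ^ 2)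
      = ENNReal.ofReal (Real.pi / 3 * r ^ 2 * h) := by
  have hcont : Continuous fun t : ℝ => Real.pi * r ^ 2 * (1 - t / h) ^ 2 := by fun_prop
  have hint : IntegrableOn (fun t : ℝ => Real.pi * r ^ 2 * (1 - t / h) ^ 2) (Set.Ioo 0 h) :=
    (hcont.integrableOn_Icc (a := 0) (b := h)).mono_set Set.Ioo_subset_Icc_self
  rw [← ofReal_integral_eq_lintegral_ofReal hint]
  swap
  · filter_upwards with t
    positivity
  congr 1
  have h1 : ∫ t in Set.Ioo (0:ℝ) h, Real.pi * r ^ 2 * (1 - t / h) ^ 2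
      = ∫ t in (0:ℝ)..h, Real.pi * r ^ 2 * (1 - t / h) ^ 2 := by
    rw [intervalIntegral.integral_of_le hh.le, integral_Ioc_eq_integral_Ioo]
  rw [h1]
  have hderiv : ∀ t ∈ Set.uIcc (0:ℝ) h, HasDerivAt
      (fun t : ℝ => -(Real.pi * r ^ 2 * h / 3) * (1 - t / h) ^ 3)
      (Real.pi * r ^ 2 * (1 - t / h) ^ 2) t := by
    intro t _
    have h2 : HasDerivAt (fun t : ℝ => 1 - t / h) (-(1/h)) t := by
      simpa using ((hasDerivAt_id t).div_const h).const_sub 1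
    have h3 := (h2.pow 3).const_mul (-(Real.pi * r ^ 2 * h / 3))
    refine h3.congr_deriv ?_
    push_cast
    field_simp
  rw [intervalIntegral.integral_eq_sub_of_hasDerivAt hderiv (hcont.intervalIntegrable _ _)]
  try field_simp
  try ring

lemma cone_vol (S : Set (ℝ × (Fin 2 → ℝ))) (hS : MeasurableSet S) (hconv : Convex ℝ S)
    (h : ℝ) (hh : 0 < h) (c : Fin 2 → ℝ) (hapex : ((h, c) : ℝ × (Fin 2 → ℝ)) ∈ S)
    (r : ℝ) (hr : 0 < r)
    (hdisk : ∀ w : Fin 2 → ℝ, w 0 ^ 2 + w 1 ^ 2 < r ^ 2 → ((0:ℝ), w) ∈ S) :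
    ENNReal.ofReal (Real.pi / 3 * r ^ 2 * h) ≤ volume (S ∩ Set.Ioo 0 h ×ˢ Set.univ) := by
  have hT : MeasurableSet (S ∩ Set.Ioo 0 h ×ˢ Set.univ) :=
    hS.inter (measurableSet_Ioo.prod MeasurableSet.univ)
  rw [MeasureTheory.Measure.volume_eq_prod ℝ (Fin 2 → ℝ), Measure.prod_apply hT]
  -- slice bound
  have hslice : ∀ t ∈ Set.Ioo (0:ℝ) h,
      ENNReal.ofReal (Real.pi * r ^ 2 * (1 - t / h) ^ 2)
        ≤ volume (Prod.mk t ⁻¹' (S ∩ Set.Ioo 0 h ×ˢ Set.univ)) := by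
    intro t ht
    have hl0 : 0 < t / h := div_pos ht.1 hh
    have hl1 : t / h < 1 := (div_lt_one hh).2 ht.2
    have h1l : 0 < 1 - t / h := by linarith
    have hsub : {v : Fin 2 → ℝ | (v 0 - (t/h) * c 0) ^ 2 + (v 1 - (t/h) * c 1) ^ 2
        < ((1 - t/h) * r) ^ 2} ⊆ Prod.mk t ⁻¹' (S ∩ Set.Ioo 0 h ×ˢ Set.univ) := by
      intro v hv
      simp only [Set.mem_setOf_eq] at hv
      set μ := (1 : ℝ) - t / h with hμ
      -- the rescaled point in the disk
      set w : Fin 2 → ℝ := fun i => (v i - (t/h) * c i) / μ with hw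
      have hwmem : w 0 ^ 2 + w 1 ^ 2 < r ^ 2 := by
        rw [hw]
        simp only
        rw [div_pow, div_pow, ← add_div, div_lt_iff₀ (by positivity)]
        calc (v 0 - t / h * c 0) ^ 2 + (v 1 - t / h * c 1) ^ 2 < (μ * r) ^ 2 := hv
        _ = r ^ 2 * μ ^ 2 := by ring
      have := hconv hapex (hdisk w hwmem) hl0.le h1l.le (by ring)
      have hpt : (t / h) • ((h, c) : ℝ × (Fin 2 → ℝ)) + μ • ((0:ℝ), w) = (t, v) := by
        apply Prod.ext
        · simp only [Prod.smul_fst, Prod.fst_add, Prod.smul_snd, smul_eq_mul]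
          field_simp
          ring
        · simp only [Prod.smul_snd, Prod.snd_add]
          funext i
          simp only [Pi.add_apply, Pi.smul_apply, smul_eq_mul, hw]
          field_simp
          ring
      rw [hpt] at this
      constructor
      · exact this
      · exact ⟨ht, Set.mem_univ _⟩
    calc ENNReal.ofReal (Real.pi * r ^ 2 * (1 - t / h) ^ 2)
        = volume {v : Fin 2 → ℝ | (v 0 - (t/h) * c 0) ^ 2 + (v 1 - (t/h) * c 1) ^ 2
            < ((1 - t/h) * r) ^ 2} := by
          rw [disk_volume (fun i => (t/h) * c i) ((1 - t/h) * r) (mul_pos h1l hr)]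
          rw [← ENNReal.ofReal_pow (mul_pos h1l hr).le, ← ENNReal.ofReal_mul Real.pi_pos.le]
          congr 1
          ring
      _ ≤ volume (Prod.mk t ⁻¹' (S ∩ Set.Ioo 0 h ×ˢ Set.univ)) := measure_mono hsub
  calc ENNReal.ofReal (Real.pi / 3 * r ^ 2 * h)
      = ∫⁻ t in Set.Ioo (0:ℝ) h, ENNReal.ofReal (Real.pi * r ^ 2 * (1 - t / h) ^ 2) :=
        (integral_cone h r hh).symm
    _ ≤ ∫⁻ t in Set.Ioo (0:ℝ) h, volume (Prod.mk t ⁻¹' (S ∩ Set.Ioo 0 h ×ˢ Set.univ)) := by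
        apply setLIntegral_mono (measurable_measure_prodMk_left hT) hslice
    _ ≤ ∫⁻ t, volume (Prod.mk t ⁻¹' (S ∩ Set.Ioo 0 h ×ˢ Set.univ)) :=
        setLIntegral_le_lintegral _ _

/-- For an open convex bounded set `Ω ⊂ ℝ³`, any two points `x, y ∈ Ω` and any ball
`B(z,r) ⊆ Ω` with `r > 0`, the volume of `Ω` is at least `(π/3) r² |x - y|`. -/
theorem volume_ge_cone_volume
    (Ω : Set (EuclideanSpace ℝ (Fin 3)))
    (hopen : IsOpen Ω) (hconv : Convex ℝ Ω) (hbdd : Bornology.IsBounded Ω)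
    (x y : EuclideanSpace ℝ (Fin 3)) (hx : x ∈ Ω) (hy : y ∈ Ω)
    (z : EuclideanSpace ℝ (Fin 3)) (r : ℝ) (hr : 0 < r)
    (hball : Metric.ball z r ⊆ Ω) :
    (volume Ω).toReal ≥ (Real.pi / 3) * r ^ 2 * dist x y := by
  have hfin : volume Ω ≠ ⊤ := hbdd.measure_lt_top.ne
  rcases eq_or_ne x y with rfl | hxy
  · simp only [dist_self, mul_zero, ge_iff_le]
    exact ENNReal.toReal_nonneg
  have hd : (0:ℝ) < dist x y := dist_pos.2 hxy
  have hxy' : x - y ≠ 0 := sub_ne_zero.2 hxy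
  set u : EuclideanSpace ℝ (Fin 3) := ‖x - y‖⁻¹ • (x - y) with hu
  have huu : ‖u‖ = 1 := norm_smul_inv_norm hxy'
  -- orthonormal basis with b 0 = u
  have hortho : Orthonormal ℝ (Set.restrict {(0 : Fin 3)} (fun _ => u)) := by
    constructor
    · intro i; exact huu
    · intro i j hij
      exact absurd (Subsingleton.elim i j) hij
  obtain ⟨b, hb⟩ := Orthonormal.exists_orthonormalBasis_extension_of_card_eq
    (𝕜 := ℝ) (by simp) hortho
  have hb0 : b 0 = u := hb 0 rfl
  -- the measure preserving parametrization
  set Ψ : ℝ × (Fin 2 → ℝ) → EuclideanSpace ℝ (Fin 3) :=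
    fun p => z + b.repr.symm ((MeasurableEquiv.toLp 2 (Fin 3 → ℝ)).symm.symm
      ((MeasurableEquiv.piFinSuccAbove (fun _ : Fin 3 => ℝ) 0).symm p)) with hΨ
  have hmp : MeasurePreserving Ψ volume volume := by
    have m1 := (volume_preserving_piFinSuccAbove (fun _ : Fin 3 => ℝ) 0).symm
    have m2 := (EuclideanSpace.volume_preserving_symm_measurableEquiv_toLp (Fin 3)).symm
    have m3 := b.measurePreserving_repr_symm
    have m4 := measurePreserving_add_left (volume : Measure (EuclideanSpace ℝ (Fin 3))) z
    exact m4.comp (m3.comp (m2.comp m1))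
  set S : Set (ℝ × (Fin 2 → ℝ)) := Ψ ⁻¹' Ω with hS
  have hSmeas : MeasurableSet S := hmp.measurable hopen.measurableSet
  have hvol : volume S = volume Ω :=
    hmp.measure_preimage hopen.measurableSet.nullMeasurableSet
  -- affinity of Ψ
  have hΨaff : ∀ (a b' : ℝ), a + b' = 1 → ∀ p q : ℝ × (Fin 2 → ℝ),
      Ψ (a • p + b' • q) = a • Ψ p + b' • Ψ q := by
    intro a b' hab p q
    have key : (MeasurableEquiv.piFinSuccAbove (fun _ : Fin 3 => ℝ) 0).symm (a • p + b' • q)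
        = a • (MeasurableEquiv.piFinSuccAbove (fun _ : Fin 3 => ℝ) 0).symm p
          + b' • (MeasurableEquiv.piFinSuccAbove (fun _ : Fin 3 => ℝ) 0).symm q := by
      simp only [MeasurableEquiv.piFinSuccAbove_symm_apply]
      funext i
      refine Fin.cases ?_ (fun j => ?_) i <;>
        simp [Fin.insertNth_zero', Prod.fst_add, Prod.snd_add]
    rw [hΨ]
    simp only [key, MeasurableEquiv.symm_symm, MeasurableEquiv.toLp_apply, WithLp.toLp_add,
      WithLp.toLp_smul, map_add, _root_.map_smul]
    have hb'' : b' = 1 - a := by linarith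
    subst hb''
    module
  have hSconv : Convex ℝ S := by
    intro p hp q hq a b' ha hb' hab
    show Ψ _ ∈ Ω
    rw [hΨaff a b' hab p q]
    exact hconv hp hq ha hb' hab
  -- coordinates of points of Ω
  set Θ : EuclideanSpace ℝ (Fin 3) → ℝ × (Fin 2 → ℝ) :=
    fun q => (MeasurableEquiv.piFinSuccAbove (fun _ : Fin 3 => ℝ) 0)
      ((MeasurableEquiv.toLp 2 (Fin 3 → ℝ)).symm (b.repr (q - z))) with hΘ
  have hΨΘ : ∀ q, Ψ (Θ q) = q := by
    intro q
    rw [hΨ, hΘ]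
    simp only [MeasurableEquiv.symm_apply_apply, LinearIsometryEquiv.symm_apply_apply]
    module
  have hΘmem : ∀ q ∈ Ω, Θ q ∈ S := by
    intro q hq
    show Ψ (Θ q) ∈ Ω
    rw [hΨΘ]; exact hq
  have hΘfst : ∀ q, (Θ q).1 = ⟪b 0, q - z⟫ := by
    intro q
    have h1 : (Θ q).1 = b.repr (q - z) 0 := rfl
    rw [h1, OrthonormalBasis.repr_apply_apply]
  have hnorm : ‖x - y‖ ≠ 0 := norm_ne_zero_iff.2 hxy'
  -- the disk is inside S
  have hdisk : ∀ w : Fin 2 → ℝ, w 0 ^ 2 + w 1 ^ 2 < r ^ 2 → ((0:ℝ), w) ∈ S := by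
    intro w hw
    show Ψ (0, w) ∈ Ω
    apply hball
    rw [Metric.mem_ball, hΨ]
    simp only
    rw [dist_self_add_left, LinearIsometryEquiv.norm_map]
    set V : EuclideanSpace ℝ (Fin 3) :=
      (MeasurableEquiv.toLp 2 (Fin 3 → ℝ)).symm.symm
        ((MeasurableEquiv.piFinSuccAbove (fun _ : Fin 3 => ℝ) 0).symm ((0:ℝ), w)) with hV
    have hV0 : V 0 = 0 := rfl
    have hV1 : V 1 = w 0 := rfl
    have hV2 : V 2 = w 1 := rfl
    rw [EuclideanSpace.norm_eq, Fin.sum_univ_three, hV0, hV1, hV2]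
    rw [show ∀ X, Real.sqrt X < r ↔ X < r ^ 2 from fun X => Real.sqrt_lt' hr]
    simp only [Real.norm_eq_abs, sq_abs]
    simpa using hw
  -- the key coordinate identity
  have hkey : (Θ x).1 - (Θ y).1 = dist x y := by
    rw [hΘfst, hΘfst, ← inner_sub_right, hb0]
    rw [show (x - z) - (y - z) = x - y from by abel]
    rw [hu, real_inner_smul_left, real_inner_self_eq_norm_sq, dist_eq_norm]
    rw [pow_two, ← mul_assoc, inv_mul_cancel₀ hnorm, one_mul]
  set a : ℝ := (Θ x).1 with ha
  set bb : ℝ := (Θ y).1 with hbb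
  -- first cone
  have hA : ENNReal.ofReal (Real.pi / 3 * r ^ 2 * max a 0)
      ≤ volume (S ∩ Set.Ioo 0 (max a 0) ×ˢ Set.univ) := by
    rcases le_or_gt a 0 with h | h
    · rw [max_eq_right h]
      simp
    · rw [max_eq_left h.le]
      refine cone_vol S hSmeas hSconv a h (Θ x).2 ?_ r hr hdisk
      have : ((a, (Θ x).2) : ℝ × (Fin 2 → ℝ)) = Θ x := by rw [ha]
      rw [this]
      exact hΘmem x hx
  -- mirrored cone
  set N : ℝ × (Fin 2 → ℝ) → ℝ × (Fin 2 → ℝ) := fun p => (-p.1, p.2) with hN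
  have hNmeas : Measurable N := (measurable_fst.neg).prodMk measurable_snd
  have hNmp : MeasurePreserving N volume volume :=
    (Measure.measurePreserving_neg (volume : Measure ℝ)).prod
      (MeasurePreserving.id (volume : Measure (Fin 2 → ℝ)))
  have hS'conv : Convex ℝ (N ⁻¹' S) := by
    intro p hp q hq α β hα hβ hαβ
    have hNe : N (α • p + β • q) = α • N p + β • N q := by
      apply Prod.ext
      · simp only [hN, Prod.fst_add, Prod.smul_fst, smul_eq_mul]; ring
      · simp only [hN, Prod.snd_add, Prod.smul_snd]
    show N _ ∈ S
    rw [hNe]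
    exact hSconv hp hq hα hβ hαβ
  have hNdisk : ∀ w : Fin 2 → ℝ, w 0 ^ 2 + w 1 ^ 2 < r ^ 2 → ((0:ℝ), w) ∈ N ⁻¹' S := by
    intro w hw
    show N (0, w) ∈ S
    rw [show N ((0:ℝ), w) = (0, w) from by simp [hN]]
    exact hdisk w hw
  have hB : ENNReal.ofReal (Real.pi / 3 * r ^ 2 * max (-bb) 0)
      ≤ volume (S ∩ Set.Ioo (-(max (-bb) 0)) 0 ×ˢ Set.univ) := by
    rcases le_or_gt (-bb) 0 with h | h
    · rw [max_eq_right h]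
      simp
    · rw [max_eq_left h.le]
      have happly := cone_vol (N ⁻¹' S) (hNmeas hSmeas) hS'conv (-bb) h (Θ y).2 ?_ r hr hNdisk
      · refine le_trans happly (le_of_eq ?_)
        have hpre : N ⁻¹' (S ∩ Set.Ioo (-(-bb)) 0 ×ˢ Set.univ)
            = (N ⁻¹' S) ∩ Set.Ioo 0 (-bb) ×ˢ Set.univ := by
          ext p
          simp only [Set.mem_preimage, Set.mem_inter_iff, Set.mem_prod, Set.mem_Ioo,
            Set.mem_univ, and_true, hN]
          constructor
          · rintro ⟨h1, h2, h3⟩; exact ⟨h1, by linarith, by linarith⟩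
          · rintro ⟨h1, h2, h3⟩; exact ⟨h1, by linarith, by linarith⟩
        rw [← hpre]
        exact hNmp.measure_preimage ((hSmeas.inter
          (measurableSet_Ioo.prod MeasurableSet.univ)).nullMeasurableSet)
      · show N (-bb, (Θ y).2) ∈ S
        rw [show N ((-bb : ℝ), (Θ y).2) = (bb, (Θ y).2) from by simp [hN]]
        rw [show ((bb, (Θ y).2) : ℝ × (Fin 2 → ℝ)) = Θ y from by rw [hbb]]
        exact hΘmem y hy
  -- assemble
  have hdisj : Disjoint (S ∩ Set.Ioo 0 (max a 0) ×ˢ Set.univ)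
      (S ∩ Set.Ioo (-(max (-bb) 0)) 0 ×ˢ Set.univ) := by
    rw [Set.disjoint_left]
    rintro p ⟨_, hp1, _⟩ ⟨_, hq1, _⟩
    exact absurd hq1.2 (not_lt.2 hp1.1.le)
  have hAB : volume (S ∩ Set.Ioo 0 (max a 0) ×ˢ Set.univ)
      + volume (S ∩ Set.Ioo (-(max (-bb) 0)) 0 ×ˢ Set.univ) ≤ volume S := by
    rw [← measure_union hdisj (hSmeas.inter (measurableSet_Ioo.prod MeasurableSet.univ))]
    exact measure_mono (Set.union_subset Set.inter_subset_left Set.inter_subset_left)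
  have hsum : ENNReal.ofReal (Real.pi / 3 * r ^ 2 * dist x y) ≤ volume S := by
    have hd2 : dist x y ≤ max a 0 + max (-bb) 0 := by
      have h1 : a ≤ max a 0 := le_max_left _ _
      have h2 : -bb ≤ max (-bb) 0 := le_max_left _ _
      linarith [hkey]
    calc ENNReal.ofReal (Real.pi / 3 * r ^ 2 * dist x y)
        ≤ ENNReal.ofReal (Real.pi / 3 * r ^ 2 * (max a 0 + max (-bb) 0)) := by
          apply ENNReal.ofReal_le_ofReal
          apply mul_le_mul_of_nonneg_left hd2 (by positivity)
      _ = ENNReal.ofReal (Real.pi / 3 * r ^ 2 * max a 0)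
          + ENNReal.ofReal (Real.pi / 3 * r ^ 2 * max (-bb) 0) := by
          rw [← ENNReal.ofReal_add (by positivity) (by positivity)]
          ring_nf
      _ ≤ volume (S ∩ Set.Ioo 0 (max a 0) ×ˢ Set.univ)
          + volume (S ∩ Set.Ioo (-(max (-bb) 0)) 0 ×ˢ Set.univ) := add_le_add hA hB
      _ ≤ volume S := hAB
  rw [ge_iff_le, ← ENNReal.ofReal_le_iff_le_toReal hfin]
  exact hvol ▸ hsum
end
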